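/- arXiv:1212.4717 — 2 statements merged into one kernel-verified Lean document; each statement's English description precedes it below -/
import Mathlib

section
/- There exists a constant C > 0 (depending only on λ and α) such that for every t ∈ (0, 1] and every φ ≥ 0, | ∫_ℝ j(t, φ, z)² γ(z) dz − φ²(1 + (2λ + α²)t) − 2λφt | ≤ C (φ² + φ + 1) t². -/
open MeasureTheory Real
open intervalIntegral

/-- Standard Gaussian density on ℝ. -/
noncomputable def gaussDensity (z : ℝ) : ℝ := Real.exp (-z ^ 2 / 2) / Real.sqrt (2 * Real.pi)

/-- One-step update of the conditional odds process upon observing a normalized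
increment `z` after a waiting time `t`, starting from odds `φ`. -/
noncomputable def jfun (lam alp t φ z : ℝ) : ℝ :=
  Real.exp (alp * z * Real.sqrt t + (lam - alp ^ 2 / 2) * t) * φ +
    ∫ u in (0:ℝ)..t, lam * Real.exp ((lam + alp * z / Real.sqrt t) * u - alp ^ 2 * u ^ 2 / (2 * t))




lemma gaussDensity_nonneg (z : ℝ) : 0 ≤ gaussDensity z := by
  unfold gaussDensity
  positivity

lemma key_rw (c z : ℝ) :
    Real.exp (c * z) * gaussDensity z
      = Real.exp (c ^ 2 / 2) * (Real.exp (-(1/2) * (z - c) ^ 2) / Real.sqrt (2 * Real.pi)) := by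
  unfold gaussDensity
  rw [mul_div_assoc', ← Real.exp_add, mul_div_assoc', ← Real.exp_add]
  ring_nf

lemma integrable_exp_mul_gauss (c : ℝ) :
    Integrable fun z => Real.exp (c * z) * gaussDensity z := by
  have h : Integrable fun z : ℝ => Real.exp (-(1/2) * z ^ 2) := by
    simpa using integrable_exp_neg_mul_sq (b := (1/2 : ℝ)) (by norm_num)
  have h2 : Integrable fun z : ℝ => Real.exp (-(1/2) * (z - c) ^ 2) := h.comp_sub_right c
  have := ((h2.div_const (Real.sqrt (2 * Real.pi))).const_mul (Real.exp (c ^ 2 / 2)))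
  exact this.congr (by filter_upwards with z using (key_rw c z).symm)

lemma integral_gauss_one : ∫ z : ℝ, Real.exp (-(1/2) * z ^ 2) / Real.sqrt (2 * Real.pi) = 1 := by
  rw [MeasureTheory.integral_div]
  have : ∫ z : ℝ, Real.exp (-(1/2) * z ^ 2) = Real.sqrt (2 * Real.pi) := by
    have h := integral_gaussian (1/2 : ℝ)
    rw [show Real.pi / (1/2) = 2 * Real.pi by ring] at h
    exact h
  rw [this, div_self (by positivity)]

lemma integral_exp_mul_gauss (c : ℝ) :
    ∫ z : ℝ, Real.exp (c * z) * gaussDensity z = Real.exp (c ^ 2 / 2) := by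
  have h0 : (∫ z : ℝ, Real.exp (-(1/2) * (z - c) ^ 2)) = Real.sqrt (2 * Real.pi) := by
    rw [integral_sub_right_eq_self (μ := volume) (fun z => Real.exp (-(1/2) * z ^ 2)) c]
    have h := integral_gaussian (1/2 : ℝ)
    rw [show Real.pi / (1/2) = 2 * Real.pi by ring] at h
    exact h
  calc ∫ z : ℝ, Real.exp (c * z) * gaussDensity z
      = ∫ z : ℝ, Real.exp (c ^ 2 / 2) * (Real.exp (-(1/2) * (z - c) ^ 2) / Real.sqrt (2 * Real.pi)) :=
        integral_congr_ae (by filter_upwards with z using key_rw c z)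
    _ = Real.exp (c ^ 2 / 2) * ∫ z : ℝ, Real.exp (-(1/2) * (z - c) ^ 2) / Real.sqrt (2 * Real.pi) :=
        MeasureTheory.integral_const_mul _ _
    _ = Real.exp (c ^ 2 / 2) * ((∫ z : ℝ, Real.exp (-(1/2) * (z - c) ^ 2)) / Real.sqrt (2 * Real.pi)) := by
        rw [MeasureTheory.integral_div]
    _ = Real.exp (c ^ 2 / 2) := by rw [h0, div_self (by positivity), mul_one]

lemma exp_abs_le (c z : ℝ) (hc : 0 ≤ c) :
    Real.exp (c * |z|) ≤ Real.exp (c * z) + Real.exp (-c * z) := by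
  rcases abs_cases z with ⟨h, _⟩ | ⟨h, _⟩
  · rw [h]
    nlinarith [Real.exp_pos (-c * z)]
  · rw [h]
    have : c * -z = -c * z := by ring
    rw [this]
    nlinarith [Real.exp_pos (c * z)]

lemma integrable_exp_abs_mul_gauss (c : ℝ) (hc : 0 ≤ c) :
    Integrable fun z => Real.exp (c * |z|) * gaussDensity z := by
  refine Integrable.mono' ((integrable_exp_mul_gauss c).add (integrable_exp_mul_gauss (-c))) ?_ ?_
  · apply Continuous.aestronglyMeasurable
    unfold gaussDensity
    fun_prop (disch := positivity)
  · filter_upwards with z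
    rw [Real.norm_eq_abs,
      abs_of_nonneg (mul_nonneg (Real.exp_pos _).le (gaussDensity_nonneg z))]
    simp only [Pi.add_apply]
    have := exp_abs_le c z hc
    have hg := gaussDensity_nonneg z
    nlinarith

lemma integral_exp_abs_mul_gauss_le (c : ℝ) (hc : 0 ≤ c) :
    (∫ z : ℝ, Real.exp (c * |z|) * gaussDensity z) ≤ 2 * Real.exp (c ^ 2 / 2) := by
  have h1 : (∫ z : ℝ, Real.exp (c * |z|) * gaussDensity z)
      ≤ ∫ z : ℝ, (Real.exp (c * z) + Real.exp (-c * z)) * gaussDensity z := by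
    refine integral_mono (integrable_exp_abs_mul_gauss c hc)
      (((integrable_exp_mul_gauss c).add (integrable_exp_mul_gauss (-c))).congr ?_) ?_
    · filter_upwards with z using (add_mul _ _ _).symm
    · intro z
      dsimp only
      have := exp_abs_le c z hc
      have hg := gaussDensity_nonneg z
      nlinarith
  have h2 : ∫ z : ℝ, (Real.exp (c * z) + Real.exp (-c * z)) * gaussDensity z
      = 2 * Real.exp (c ^ 2 / 2) := by
    simp_rw [add_mul]
    rw [integral_add (integrable_exp_mul_gauss c) (integrable_exp_mul_gauss (-c)),
      integral_exp_mul_gauss, integral_exp_mul_gauss]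
    rw [neg_pow]
    ring_nf
  linarith


lemma exp_sub_one_le (u : ℝ) : Real.exp u - 1 ≤ u * Real.exp u := by
  have h := Real.add_one_le_exp (-u)
  have hp := Real.exp_pos u
  have : Real.exp (-u) * Real.exp u = 1 := by
    rw [← Real.exp_add]; simp
  nlinarith

lemma exp_quad_bound (x : ℝ) (hx : 0 ≤ x) :
    Real.exp x - 1 - x ≤ x ^ 2 / 2 * Real.exp x := by
  have h1 : Real.exp x - 1 - x = ∫ u in (0:ℝ)..x, (Real.exp u - 1) := by
    rw [intervalIntegral.integral_sub (Real.continuous_exp.intervalIntegrable 0 x)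
      (intervalIntegrable_const)]
    rw [integral_exp, intervalIntegral.integral_const]
    simp
  have h2 : (∫ u in (0:ℝ)..x, (Real.exp u - 1)) ≤ ∫ u in (0:ℝ)..x, u * Real.exp x := by
    apply intervalIntegral.integral_mono_on hx
    · exact (Real.continuous_exp.sub continuous_const).intervalIntegrable 0 x
    · exact (continuous_id.mul continuous_const).intervalIntegrable 0 x
    · intro u hu
      have h3 := exp_sub_one_le u
      have h4 : Real.exp u ≤ Real.exp x := Real.exp_le_exp.mpr hu.2
      have h5 : 0 ≤ u := hu.1
      nlinarith [Real.exp_pos u]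
  have h3 : (∫ u in (0:ℝ)..x, u * Real.exp x) = x ^ 2 / 2 * Real.exp x := by
    rw [intervalIntegral.integral_mul_const, integral_id]
    ring
  linarith [h1, h2, h3]

lemma exp_taylor_abs (x t : ℝ) (hx : 0 ≤ x) (ht0 : 0 ≤ t) (ht1 : t ≤ 1) :
    |Real.exp (x * t) - 1 - x * t| ≤ x ^ 2 * Real.exp x / 2 * t ^ 2 := by
  have hlb : 0 ≤ Real.exp (x * t) - 1 - x * t := by
    have := Real.add_one_le_exp (x * t)
    linarith
  rw [abs_of_nonneg hlb]
  have h1 := exp_quad_bound (x * t) (by positivity)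
  have h2 : Real.exp (x * t) ≤ Real.exp x := by
    apply Real.exp_le_exp.mpr
    nlinarith
  nlinarith [sq_nonneg x, sq_nonneg t, mul_nonneg hx ht0, Real.exp_pos (x*t), sq_nonneg (x*t),
    mul_le_mul_of_nonneg_left h2 (sq_nonneg (x*t))]





noncomputable def Af (lam alp t z : ℝ) : ℝ :=
  Real.exp (alp * z * Real.sqrt t + (lam - alp ^ 2 / 2) * t)

noncomputable def Kf (lam alp t u z : ℝ) : ℝ :=
  lam * Real.exp ((lam + alp * z / Real.sqrt t) * u - alp ^ 2 * u ^ 2 / (2 * t))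

noncomputable def Bf (lam alp t z : ℝ) : ℝ := ∫ u in Set.Ioc (0:ℝ) t, Kf lam alp t u z


lemma continuous_gaussDensity : Continuous gaussDensity := by
  unfold gaussDensity
  fun_prop (disch := positivity)

section core
variable {lam alp t : ℝ}

lemma Kf_nonneg (hlam : 0 < lam) (u z : ℝ) : 0 ≤ Kf lam alp t u z := by
  unfold Kf; positivity

lemma Kf_le (hlam : 0 < lam) (halp : 0 < alp) (ht0 : 0 < t) (ht1 : t ≤ 1)
    (z : ℝ) {u : ℝ} (hu : u ∈ Set.Ioc (0:ℝ) t) :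
    Kf lam alp t u z ≤ lam * Real.exp (lam + alp * |z|) := by
  unfold Kf
  have hst : 0 < Real.sqrt t := Real.sqrt_pos.mpr ht0
  apply mul_le_mul_of_nonneg_left _ hlam.le
  apply Real.exp_le_exp.mpr
  have hu0 : 0 < u := hu.1
  have hut : u ≤ t := hu.2
  have h1 : (lam + alp * z / Real.sqrt t) * u - alp ^ 2 * u ^ 2 / (2 * t)
      ≤ lam * u + alp * z * u / Real.sqrt t := by
    have h0 : 0 ≤ alp ^ 2 * u ^ 2 / (2 * t) := by positivity
    have expand : (lam + alp * z / Real.sqrt t) * u - alp ^ 2 * u ^ 2 / (2 * t)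
        = lam * u + alp * z * u / Real.sqrt t - alp ^ 2 * u ^ 2 / (2 * t) := by ring
    rw [expand]
    linarith
  have h2 : lam * u ≤ lam := by nlinarith
  have h3 : alp * z * u / Real.sqrt t ≤ alp * |z| := by
    have hz : z * u ≤ |z| * Real.sqrt t * Real.sqrt t := by
      have h4 : z * u ≤ |z| * u := mul_le_mul_of_nonneg_right (le_abs_self z) hu0.le
      have h5 : u ≤ Real.sqrt t * Real.sqrt t := by
        rw [Real.mul_self_sqrt ht0.le]; exact hut
      nlinarith [abs_nonneg z]
    rw [div_le_iff₀ hst] at *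
    calc alp * z * u ≤ alp * (|z| * Real.sqrt t * Real.sqrt t) := by nlinarith
      _ ≤ alp * |z| * Real.sqrt t := by
          have hs1 : Real.sqrt t ≤ 1 := Real.sqrt_le_one.mpr ht1
          have hz1 : |z| * Real.sqrt t ≤ |z| := mul_le_of_le_one_right (abs_nonneg z) hs1
          calc alp * (|z| * Real.sqrt t * Real.sqrt t)
              = alp * Real.sqrt t * (|z| * Real.sqrt t) := by ring
            _ ≤ alp * Real.sqrt t * |z| := mul_le_mul_of_nonneg_left hz1 (by positivity)
            _ = alp * |z| * Real.sqrt t := by ring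
  linarith

instance : IsFiniteMeasure (volume.restrict (Set.Ioc (0:ℝ) t)) :=
  ⟨by rw [Measure.restrict_apply_univ]; exact measure_Ioc_lt_top⟩

lemma Ioc_mass (ht0 : 0 < t) : (volume.restrict (Set.Ioc (0:ℝ) t) Set.univ).toReal = t := by
  rw [Measure.restrict_apply_univ, Real.volume_Ioc, sub_zero, ENNReal.toReal_ofReal ht0.le]

lemma Bf_nonneg (hlam : 0 < lam) (z : ℝ) : 0 ≤ Bf lam alp t z :=
  integral_nonneg fun u => Kf_nonneg hlam u z

lemma Bf_le (hlam : 0 < lam) (halp : 0 < alp) (ht0 : 0 < t) (ht1 : t ≤ 1) (z : ℝ) :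
    Bf lam alp t z ≤ lam * Real.exp (lam + alp * |z|) * t := by
  have h := norm_integral_le_of_norm_le_const (μ := volume.restrict (Set.Ioc (0:ℝ) t))
    (f := fun u => Kf lam alp t u z) (C := lam * Real.exp (lam + alp * |z|)) ?_
  · rw [measureReal_def, Ioc_mass ht0] at h
    calc Bf lam alp t z ≤ |Bf lam alp t z| := le_abs_self _
      _ ≤ lam * Real.exp (lam + alp * |z|) * t := h
  · filter_upwards [ae_restrict_mem measurableSet_Ioc] with u hu
    rw [Real.norm_eq_abs, abs_of_nonneg (Kf_nonneg hlam u z)]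
    exact Kf_le hlam halp ht0 ht1 z hu

lemma measurable_Bf (ht0 : 0 < t) : StronglyMeasurable (fun z => Bf lam alp t z) := by
  apply MeasureTheory.StronglyMeasurable.integral_prod_right'
    (f := fun p : ℝ × ℝ => Kf lam alp t p.2 p.1)
  apply Continuous.stronglyMeasurable
  unfold Kf
  fun_prop

lemma Af_pos (z : ℝ) : 0 < Af lam alp t z := Real.exp_pos _

lemma Af_le (halp : 0 < alp) (hlam : 0 < lam) (ht0 : 0 < t) (ht1 : t ≤ 1) (z : ℝ) :
    Af lam alp t z ≤ Real.exp (lam + alp * |z|) := by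
  unfold Af
  apply Real.exp_le_exp.mpr
  have hs1 : Real.sqrt t ≤ 1 := Real.sqrt_le_one.mpr ht1
  have hs0 : 0 ≤ Real.sqrt t := Real.sqrt_nonneg t
  have h1 : alp * z * Real.sqrt t ≤ alp * |z| := by
    have : z * Real.sqrt t ≤ |z| := by
      calc z * Real.sqrt t ≤ |z| * Real.sqrt t :=
            mul_le_mul_of_nonneg_right (le_abs_self z) hs0
        _ ≤ |z| := mul_le_of_le_one_right (abs_nonneg z) hs1
    calc alp * z * Real.sqrt t = alp * (z * Real.sqrt t) := by ring
      _ ≤ alp * |z| := mul_le_mul_of_nonneg_left this halp.le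
  have h2 : (lam - alp ^ 2 / 2) * t ≤ lam := by nlinarith [sq_nonneg alp]
  linarith

lemma cross_integrable (hlam : 0 < lam) (halp : 0 < alp) (ht0 : 0 < t) (ht1 : t ≤ 1) :
    Integrable (Function.uncurry fun z u => Af lam alp t z * Kf lam alp t u z * gaussDensity z)
      (volume.prod (volume.restrict (Set.Ioc (0:ℝ) t))) := by
  have hdom : Integrable (fun p : ℝ × ℝ =>
      (lam * Real.exp (2 * lam) * (Real.exp (2 * alp * |p.1|) * gaussDensity p.1)) * (1 : ℝ))
      (volume.prod (volume.restrict (Set.Ioc (0:ℝ) t))) := by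
    exact Integrable.mul_prod
      ((integrable_exp_abs_mul_gauss (2 * alp) (by positivity)).const_mul (lam * Real.exp (2*lam)))
      (integrable_const 1)
  have hmeas : AEStronglyMeasurable
      (Function.uncurry fun z u => Af lam alp t z * Kf lam alp t u z * gaussDensity z)
      (volume.prod (volume.restrict (Set.Ioc (0:ℝ) t))) := by
    have hc : Continuous
        (Function.uncurry fun z u => Af lam alp t z * Kf lam alp t u z * gaussDensity z) := by
      have hg := continuous_gaussDensity
      unfold Function.uncurry Af Kf
      fun_prop
    exact hc.aestronglyMeasurable
  refine hdom.mono' hmeas ?_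
  · have hprod : volume.prod (volume.restrict (Set.Ioc (0:ℝ) t))
        = ((volume : Measure ℝ).prod (volume : Measure ℝ)).restrict (Set.univ ×ˢ Set.Ioc (0:ℝ) t) := by
      have h := Measure.prod_restrict (μ := (volume : Measure ℝ)) (ν := (volume : Measure ℝ))
        Set.univ (Set.Ioc (0:ℝ) t)
      rwa [Measure.restrict_univ] at h
    have hae : ∀ᵐ p : ℝ × ℝ ∂(volume.prod (volume.restrict (Set.Ioc (0:ℝ) t))),
        p ∈ Set.univ ×ˢ Set.Ioc (0:ℝ) t := by
      rw [hprod]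
      exact ae_restrict_mem (MeasurableSet.univ.prod measurableSet_Ioc)
    filter_upwards [hae] with p hp
    obtain ⟨-, hp2⟩ := hp
    set z := p.1
    set u := p.2
    have h1 : Af lam alp t z ≤ Real.exp (lam + alp * |z|) := Af_le halp hlam ht0 ht1 z
    have h2 : Kf lam alp t u z ≤ lam * Real.exp (lam + alp * |z|) := Kf_le hlam halp ht0 ht1 z hp2
    have h3 : 0 ≤ Kf lam alp t u z := Kf_nonneg hlam u z
    have h4 : 0 < Af lam alp t z := Af_pos z
    have h5 : 0 ≤ gaussDensity z := gaussDensity_nonneg z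
    rw [Function.uncurry_apply_pair, Real.norm_eq_abs,
      abs_of_nonneg (by positivity : (0:ℝ) ≤ Af lam alp t z * Kf lam alp t u z * gaussDensity z)]
    have key : Af lam alp t z * Kf lam alp t u z
        ≤ lam * Real.exp (2 * lam) * Real.exp (2 * alp * |z|) := by
      have := mul_le_mul h1 h2 h3 (Real.exp_pos _).le
      calc Af lam alp t z * Kf lam alp t u z
          ≤ Real.exp (lam + alp * |z|) * (lam * Real.exp (lam + alp * |z|)) := this
        _ = lam * Real.exp (2 * lam) * Real.exp (2 * alp * |z|) := by
            have e1 : Real.exp (lam + alp * |z|) * Real.exp (lam + alp * |z|)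
                = Real.exp (2 * lam) * Real.exp (2 * alp * |z|) := by
              rw [← Real.exp_add, ← Real.exp_add]
              congr 1
              ring
            calc Real.exp (lam + alp * |z|) * (lam * Real.exp (lam + alp * |z|))
                = lam * (Real.exp (lam + alp * |z|) * Real.exp (lam + alp * |z|)) := by ring
              _ = lam * (Real.exp (2 * lam) * Real.exp (2 * alp * |z|)) := by rw [e1]
              _ = lam * Real.exp (2 * lam) * Real.exp (2 * alp * |z|) := by ring
    calc Af lam alp t z * Kf lam alp t u z * gaussDensity z
        ≤ lam * Real.exp (2 * lam) * Real.exp (2 * alp * |z|) * gaussDensity z :=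
          mul_le_mul_of_nonneg_right key h5
      _ = lam * Real.exp (2 * lam) * (Real.exp (2 * alp * |z|) * gaussDensity z) * 1 := by ring

lemma cross_value (hlam : 0 < lam) (halp : 0 < alp) (ht0 : 0 < t) (ht1 : t ≤ 1) :
    ∫ z : ℝ, Af lam alp t z * Bf lam alp t z * gaussDensity z
      = lam * (Real.exp ((2 * lam + alp ^ 2) * t) - Real.exp (lam * t)) / (lam + alp ^ 2) := by
  have hst : (0:ℝ) < Real.sqrt t := Real.sqrt_pos.mpr ht0
  have hk : (0:ℝ) < lam + alp ^ 2 := by positivity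
  have step1 : ∀ z : ℝ, Af lam alp t z * Bf lam alp t z * gaussDensity z
      = ∫ u in Set.Ioc (0:ℝ) t, Af lam alp t z * Kf lam alp t u z * gaussDensity z := by
    intro z
    unfold Bf
    rw [show Af lam alp t z * (∫ u in Set.Ioc (0:ℝ) t, Kf lam alp t u z) * gaussDensity z
        = (Af lam alp t z * gaussDensity z) * ∫ u in Set.Ioc (0:ℝ) t, Kf lam alp t u z from by ring,
      ← MeasureTheory.integral_const_mul]
    exact integral_congr_ae (Filter.Eventually.of_forall fun u => by ring)
  rw [integral_congr_ae (Filter.Eventually.of_forall step1)]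
  rw [MeasureTheory.integral_integral_swap (cross_integrable hlam halp ht0 ht1)]
  have inner : ∀ u : ℝ, (∫ z : ℝ, Af lam alp t z * Kf lam alp t u z * gaussDensity z)
      = lam * Real.exp (lam * t + (lam + alp ^ 2) * u) := by
    intro u
    have hpt : ∀ z : ℝ, Af lam alp t z * Kf lam alp t u z * gaussDensity z
        = (lam * Real.exp ((lam - alp ^ 2 / 2) * t + lam * u - alp ^ 2 * u ^ 2 / (2 * t))) *
          (Real.exp ((alp * Real.sqrt t + alp * u / Real.sqrt t) * z) * gaussDensity z) := by
      intro z
      unfold Af Kf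
      rw [show (lam * Real.exp ((lam - alp ^ 2 / 2) * t + lam * u - alp ^ 2 * u ^ 2 / (2 * t))) *
          (Real.exp ((alp * Real.sqrt t + alp * u / Real.sqrt t) * z) * gaussDensity z)
          = lam * (Real.exp ((lam - alp ^ 2 / 2) * t + lam * u - alp ^ 2 * u ^ 2 / (2 * t)) *
            Real.exp ((alp * Real.sqrt t + alp * u / Real.sqrt t) * z)) * gaussDensity z from by ring,
        ← Real.exp_add]
      rw [show Real.exp (alp * z * Real.sqrt t + (lam - alp ^ 2 / 2) * t) *
          (lam * Real.exp ((lam + alp * z / Real.sqrt t) * u - alp ^ 2 * u ^ 2 / (2 * t))) * gaussDensity z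
          = lam * (Real.exp (alp * z * Real.sqrt t + (lam - alp ^ 2 / 2) * t) *
            Real.exp ((lam + alp * z / Real.sqrt t) * u - alp ^ 2 * u ^ 2 / (2 * t))) * gaussDensity z
          from by ring, ← Real.exp_add]
      congr 2
      field_simp
      ring
    rw [integral_congr_ae (Filter.Eventually.of_forall hpt), MeasureTheory.integral_const_mul,
      integral_exp_mul_gauss, mul_assoc, ← Real.exp_add]
    congr 1
    field_simp
    ring_nf
    rw [show Real.sqrt t ^ 4 = t ^ 2 from by
      rw [show Real.sqrt t ^ 4 = (Real.sqrt t ^ 2) ^ 2 by ring, Real.sq_sqrt ht0.le]]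
    rw [Real.sq_sqrt ht0.le]
    rw [inv_pow, Real.sq_sqrt ht0.le]
    congr 1
    have hti : t * t⁻¹ = 1 := mul_inv_cancel₀ ht0.ne'
    linear_combination (lam * u + u * alp ^ 2 + t * lam) * (t * t⁻¹ + 1) * hti
  rw [integral_congr_ae (Filter.Eventually.of_forall fun u => inner u)]
  have hpull : ∀ u : ℝ, lam * Real.exp (lam * t + (lam + alp ^ 2) * u)
      = (lam * Real.exp (lam * t)) * Real.exp (u * (lam + alp ^ 2)) := by
    intro u
    rw [Real.exp_add]
    ring
  rw [integral_congr_ae (Filter.Eventually.of_forall fun u => hpull u), MeasureTheory.integral_const_mul]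
  rw [← intervalIntegral.integral_of_le ht0.le]
  rw [intervalIntegral.integral_comp_mul_right (fun x => Real.exp x) hk.ne']
  rw [zero_mul, integral_exp, Real.exp_zero]
  rw [smul_eq_mul]
  rw [show (2 * lam + alp ^ 2) * t = lam * t + t * (lam + alp ^ 2) by ring, Real.exp_add]
  field_simp
end core

section more
variable {lam alp t : ℝ}

lemma Af_sq_eq (lam alp t z : ℝ) : (Af lam alp t z) ^ 2
    = Real.exp ((2 * lam - alp ^ 2) * t) * Real.exp ((2 * alp * Real.sqrt t) * z) := by
  unfold Af
  rw [sq, ← Real.exp_add, ← Real.exp_add]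
  congr 1
  ring

lemma integrable_Af_sq :
    Integrable (fun z => (Af lam alp t z) ^ 2 * gaussDensity z) := by
  have h := (integrable_exp_mul_gauss (2 * alp * Real.sqrt t)).const_mul
    (Real.exp ((2 * lam - alp ^ 2) * t))
  exact h.congr (Filter.Eventually.of_forall fun z => by dsimp only; rw [Af_sq_eq]; ring)

lemma integral_Af_sq (ht0 : 0 < t) :
    ∫ z : ℝ, (Af lam alp t z) ^ 2 * gaussDensity z = Real.exp ((2 * lam + alp ^ 2) * t) := by
  calc ∫ z : ℝ, (Af lam alp t z) ^ 2 * gaussDensity z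
      = ∫ z : ℝ, Real.exp ((2 * lam - alp ^ 2) * t) *
          (Real.exp ((2 * alp * Real.sqrt t) * z) * gaussDensity z) :=
        integral_congr_ae (Filter.Eventually.of_forall fun z => by dsimp only; rw [Af_sq_eq]; ring)
    _ = Real.exp ((2 * lam - alp ^ 2) * t) * Real.exp ((2 * alp * Real.sqrt t) ^ 2 / 2) := by
        rw [MeasureTheory.integral_const_mul, integral_exp_mul_gauss]
    _ = Real.exp ((2 * lam + alp ^ 2) * t) := by
        rw [← Real.exp_add]
        congr 1
        ring_nf
        rw [Real.sq_sqrt ht0.le]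
        ring

lemma Bf_le' (hlam : 0 < lam) (halp : 0 < alp) (ht0 : 0 < t) (ht1 : t ≤ 1) (z : ℝ) :
    Bf lam alp t z ≤ lam * Real.exp (lam + alp * |z|) := by
  have h := Bf_le hlam halp ht0 ht1 z
  have hpos : (0:ℝ) ≤ lam * Real.exp (lam + alp * |z|) := by positivity
  nlinarith

lemma AfBf_bound (hlam : 0 < lam) (halp : 0 < alp) (ht0 : 0 < t) (ht1 : t ≤ 1) (z : ℝ) :
    Af lam alp t z * Bf lam alp t z * gaussDensity z
      ≤ lam * Real.exp (2 * lam) * (Real.exp (2 * alp * |z|) * gaussDensity z) := by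
  have h1 := Af_le halp hlam ht0 ht1 z
  have h2 := Bf_le' hlam halp ht0 ht1 z
  have h3 := Bf_nonneg (t := t) (alp := alp) hlam z
  have h5 := gaussDensity_nonneg z
  have key : Af lam alp t z * Bf lam alp t z
      ≤ lam * Real.exp (2 * lam) * Real.exp (2 * alp * |z|) := by
    have e1 : Real.exp (lam + alp * |z|) * Real.exp (lam + alp * |z|)
        = Real.exp (2 * lam) * Real.exp (2 * alp * |z|) := by
      rw [← Real.exp_add, ← Real.exp_add]; congr 1; ring
    calc Af lam alp t z * Bf lam alp t z
        ≤ Real.exp (lam + alp * |z|) * (lam * Real.exp (lam + alp * |z|)) :=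
          mul_le_mul h1 h2 h3 (Real.exp_pos _).le
      _ = lam * (Real.exp (lam + alp * |z|) * Real.exp (lam + alp * |z|)) := by ring
      _ = lam * (Real.exp (2 * lam) * Real.exp (2 * alp * |z|)) := by rw [e1]
      _ = lam * Real.exp (2 * lam) * Real.exp (2 * alp * |z|) := by ring
  calc Af lam alp t z * Bf lam alp t z * gaussDensity z
      ≤ lam * Real.exp (2 * lam) * Real.exp (2 * alp * |z|) * gaussDensity z :=
        mul_le_mul_of_nonneg_right key h5
    _ = lam * Real.exp (2 * lam) * (Real.exp (2 * alp * |z|) * gaussDensity z) := by ring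

lemma aesm_AfBf (ht0 : 0 < t) :
    AEStronglyMeasurable (fun z => Af lam alp t z * Bf lam alp t z * gaussDensity z)
      (volume : Measure ℝ) := by
  have hA : Continuous (fun z => Af lam alp t z) := by unfold Af; fun_prop
  exact (((hA.stronglyMeasurable.mul (measurable_Bf (lam := lam) (alp := alp) ht0)).mul
    continuous_gaussDensity.stronglyMeasurable)).aestronglyMeasurable

lemma integrable_AfBf (hlam : 0 < lam) (halp : 0 < alp) (ht0 : 0 < t) (ht1 : t ≤ 1) :
    Integrable (fun z => Af lam alp t z * Bf lam alp t z * gaussDensity z) := by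
  refine Integrable.mono' (((integrable_exp_abs_mul_gauss (2 * alp) (by positivity)).const_mul
    (lam * Real.exp (2 * lam)))) (aesm_AfBf ht0) ?_
  filter_upwards with z
  rw [Real.norm_eq_abs, abs_of_nonneg (mul_nonneg (mul_nonneg (Af_pos (lam := lam) (alp := alp)
    (t := t) z).le (Bf_nonneg hlam z)) (gaussDensity_nonneg z))]
  exact AfBf_bound hlam halp ht0 ht1 z

lemma Bfsq_bound (hlam : 0 < lam) (halp : 0 < alp) (ht0 : 0 < t) (ht1 : t ≤ 1) (z : ℝ) :
    (Bf lam alp t z) ^ 2 * gaussDensity z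
      ≤ lam ^ 2 * Real.exp (2 * lam) * t ^ 2 * (Real.exp (2 * alp * |z|) * gaussDensity z) := by
  have h2 := Bf_le hlam halp ht0 ht1 z
  have h3 := Bf_nonneg (t := t) (alp := alp) hlam z
  have h5 := gaussDensity_nonneg z
  have key : (Bf lam alp t z) ^ 2 ≤ (lam * Real.exp (lam + alp * |z|) * t) ^ 2 := by
    apply sq_le_sq' (by nlinarith) h2
  have e1 : (lam * Real.exp (lam + alp * |z|) * t) ^ 2
      = lam ^ 2 * Real.exp (2 * lam) * t ^ 2 * Real.exp (2 * alp * |z|) := by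
    have : Real.exp (lam + alp * |z|) * Real.exp (lam + alp * |z|)
        = Real.exp (2 * lam) * Real.exp (2 * alp * |z|) := by
      rw [← Real.exp_add, ← Real.exp_add]; congr 1; ring
    calc (lam * Real.exp (lam + alp * |z|) * t) ^ 2
        = lam ^ 2 * t ^ 2 * (Real.exp (lam + alp * |z|) * Real.exp (lam + alp * |z|)) := by ring
      _ = lam ^ 2 * t ^ 2 * (Real.exp (2 * lam) * Real.exp (2 * alp * |z|)) := by rw [this]
      _ = lam ^ 2 * Real.exp (2 * lam) * t ^ 2 * Real.exp (2 * alp * |z|) := by ring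
  calc (Bf lam alp t z) ^ 2 * gaussDensity z
      ≤ (lam * Real.exp (lam + alp * |z|) * t) ^ 2 * gaussDensity z :=
        mul_le_mul_of_nonneg_right key h5
    _ = lam ^ 2 * Real.exp (2 * lam) * t ^ 2 * (Real.exp (2 * alp * |z|) * gaussDensity z) := by
        rw [e1]; ring

lemma integrable_Bfsq (hlam : 0 < lam) (halp : 0 < alp) (ht0 : 0 < t) (ht1 : t ≤ 1) :
    Integrable (fun z => (Bf lam alp t z) ^ 2 * gaussDensity z) := by
  refine Integrable.mono' (((integrable_exp_abs_mul_gauss (2 * alp) (by positivity)).const_mul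
    (lam ^ 2 * Real.exp (2 * lam) * t ^ 2))) ?_ ?_
  · have h := measurable_Bf (lam := lam) (alp := alp) ht0
    have heq : (fun z => (Bf lam alp t z) ^ 2 * gaussDensity z)
        = fun z => (Bf lam alp t z * Bf lam alp t z) * gaussDensity z := by
      funext z; ring
    rw [heq]
    exact ((h.mul h).mul continuous_gaussDensity.stronglyMeasurable).aestronglyMeasurable
  · filter_upwards with z
    rw [Real.norm_eq_abs, abs_of_nonneg (mul_nonneg (sq_nonneg _) (gaussDensity_nonneg z))]
    exact Bfsq_bound hlam halp ht0 ht1 z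

lemma Bfsq_integral_bound (hlam : 0 < lam) (halp : 0 < alp) (ht0 : 0 < t) (ht1 : t ≤ 1) :
    (∫ z : ℝ, (Bf lam alp t z) ^ 2 * gaussDensity z)
      ≤ lam ^ 2 * Real.exp (2 * lam) * (2 * Real.exp ((2 * alp) ^ 2 / 2)) * t ^ 2 := by
  have h1 : (∫ z : ℝ, (Bf lam alp t z) ^ 2 * gaussDensity z)
      ≤ ∫ z : ℝ, lam ^ 2 * Real.exp (2 * lam) * t ^ 2 *
          (Real.exp (2 * alp * |z|) * gaussDensity z) := by
    refine integral_mono (integrable_Bfsq hlam halp ht0 ht1)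
      ((integrable_exp_abs_mul_gauss (2 * alp) (by positivity)).const_mul _)
      fun z => Bfsq_bound hlam halp ht0 ht1 z
  have h2 : (∫ z : ℝ, lam ^ 2 * Real.exp (2 * lam) * t ^ 2 *
        (Real.exp (2 * alp * |z|) * gaussDensity z))
      = lam ^ 2 * Real.exp (2 * lam) * t ^ 2 *
        ∫ z : ℝ, Real.exp (2 * alp * |z|) * gaussDensity z := MeasureTheory.integral_const_mul _ _
  have h3 := integral_exp_abs_mul_gauss_le (2 * alp) (by positivity)
  have h4 : lam ^ 2 * Real.exp (2 * lam) * t ^ 2 *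
        (∫ z : ℝ, Real.exp (2 * alp * |z|) * gaussDensity z)
      ≤ lam ^ 2 * Real.exp (2 * lam) * t ^ 2 * (2 * Real.exp ((2 * alp) ^ 2 / 2)) :=
    mul_le_mul_of_nonneg_left h3 (by positivity)
  calc (∫ z : ℝ, (Bf lam alp t z) ^ 2 * gaussDensity z)
      ≤ lam ^ 2 * Real.exp (2 * lam) * t ^ 2 *
        ∫ z : ℝ, Real.exp (2 * alp * |z|) * gaussDensity z := by rw [← h2]; exact h1
    _ ≤ lam ^ 2 * Real.exp (2 * lam) * t ^ 2 * (2 * Real.exp ((2 * alp) ^ 2 / 2)) := h4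
    _ = lam ^ 2 * Real.exp (2 * lam) * (2 * Real.exp ((2 * alp) ^ 2 / 2)) * t ^ 2 := by ring

lemma jfun_eq (lam alp t φ : ℝ) (ht0 : 0 < t) (z : ℝ) :
    jfun lam alp t φ z = Af lam alp t z * φ + Bf lam alp t z := by
  unfold jfun Af Bf Kf
  rw [intervalIntegral.integral_of_le ht0.le]

lemma split_integral (hlam : 0 < lam) (halp : 0 < alp) (ht0 : 0 < t) (ht1 : t ≤ 1)
    (φ : ℝ) :
    ∫ z : ℝ, (jfun lam alp t φ z) ^ 2 * gaussDensity z
      = φ ^ 2 * (∫ z : ℝ, (Af lam alp t z) ^ 2 * gaussDensity z)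
        + 2 * φ * (∫ z : ℝ, Af lam alp t z * Bf lam alp t z * gaussDensity z)
        + ∫ z : ℝ, (Bf lam alp t z) ^ 2 * gaussDensity z := by
  have hpt : ∀ z : ℝ, (jfun lam alp t φ z) ^ 2 * gaussDensity z
      = φ ^ 2 * ((Af lam alp t z) ^ 2 * gaussDensity z)
        + 2 * φ * (Af lam alp t z * Bf lam alp t z * gaussDensity z)
        + (Bf lam alp t z) ^ 2 * gaussDensity z := by
    intro z
    rw [jfun_eq lam alp t φ ht0 z]
    ring
  rw [integral_congr_ae (Filter.Eventually.of_forall hpt)]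
  have hA2 : Integrable (fun z => φ ^ 2 * ((Af lam alp t z) ^ 2 * gaussDensity z)) volume :=
    (integrable_Af_sq).const_mul (φ ^ 2)
  have hAB : Integrable
      (fun z => 2 * φ * (Af lam alp t z * Bf lam alp t z * gaussDensity z)) volume :=
    (integrable_AfBf hlam halp ht0 ht1).const_mul (2 * φ)
  have hB2 : Integrable (fun z => (Bf lam alp t z) ^ 2 * gaussDensity z) volume :=
    integrable_Bfsq hlam halp ht0 ht1
  have h12 : Integrable (fun z => φ ^ 2 * ((Af lam alp t z) ^ 2 * gaussDensity z)
      + 2 * φ * (Af lam alp t z * Bf lam alp t z * gaussDensity z)) volume := hA2.add hAB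
  rw [integral_add h12 hB2, integral_add hA2 hAB, MeasureTheory.integral_const_mul, MeasureTheory.integral_const_mul]

end more
lemma assembly_ineq (c1 c2 c3 φ s : ℝ) (h1 : 0 ≤ c1) (h2 : 0 ≤ c2) (h3 : 0 ≤ c3)
    (hφ : 0 ≤ φ) (hs : 0 ≤ s) :
    φ ^ 2 * (c1 * s) + c2 * (φ * s) + c3 * s ≤ (c1 + c2 + c3 + 1) * (φ ^ 2 + φ + 1) * s := by
  nlinarith [mul_nonneg (mul_nonneg h1 hs) hφ, mul_nonneg (mul_nonneg h2 hs) hφ,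
    mul_nonneg (mul_nonneg h3 hs) hφ, mul_nonneg (mul_nonneg h1 hs) (sq_nonneg φ),
    mul_nonneg (mul_nonneg h2 hs) (sq_nonneg φ), mul_nonneg (mul_nonneg h3 hs) (sq_nonneg φ),
    mul_nonneg h1 hs, mul_nonneg h2 hs, mul_nonneg h3 hs, mul_nonneg hs hφ,
    mul_nonneg hs (sq_nonneg φ)]

set_option maxHeartbeats 1000000 in
lemma main_est (lam alp : ℝ) (hlam : 0 < lam) (halp : 0 < alp) {t : ℝ}
    (ht0 : 0 < t) (ht1 : t ≤ 1) (φ : ℝ) (hφ : 0 ≤ φ) :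
    |(∫ z : ℝ, (jfun lam alp t φ z) ^ 2 * gaussDensity z) -
        φ ^ 2 * (1 + (2 * lam + alp ^ 2) * t) - 2 * lam * φ * t| ≤
      ((2 * lam + alp ^ 2) ^ 2 * Real.exp (2 * lam + alp ^ 2) / 2
        + 2 * lam / (lam + alp ^ 2) * ((2 * lam + alp ^ 2) ^ 2 * Real.exp (2 * lam + alp ^ 2) / 2
          + lam ^ 2 * Real.exp lam / 2)
        + lam ^ 2 * Real.exp (2 * lam) * (2 * Real.exp ((2 * alp) ^ 2 / 2)) + 1)
        * (φ ^ 2 + φ + 1) * t ^ 2 := by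
  have ha0 : (0:ℝ) < 2 * lam + alp ^ 2 := by positivity
  have hk : (0:ℝ) < lam + alp ^ 2 := by positivity
  have hsplit := split_integral hlam halp ht0 ht1 φ
  rw [integral_Af_sq ht0, cross_value hlam halp ht0 ht1] at hsplit
  set R := ∫ z : ℝ, (Bf lam alp t z) ^ 2 * gaussDensity z with hRdef
  have hR0 : 0 ≤ R :=
    integral_nonneg fun z => mul_nonneg (sq_nonneg _) (gaussDensity_nonneg z)
  have hR1 : R ≤ lam ^ 2 * Real.exp (2 * lam) * (2 * Real.exp ((2 * alp) ^ 2 / 2)) * t ^ 2 :=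
    Bfsq_integral_bound hlam halp ht0 ht1
  have hEa : |Real.exp ((2 * lam + alp ^ 2) * t) - 1 - (2 * lam + alp ^ 2) * t|
      ≤ (2 * lam + alp ^ 2) ^ 2 * Real.exp (2 * lam + alp ^ 2) / 2 * t ^ 2 :=
    exp_taylor_abs (2 * lam + alp ^ 2) t ha0.le ht0.le ht1
  have hEb : |Real.exp (lam * t) - 1 - lam * t| ≤ lam ^ 2 * Real.exp lam / 2 * t ^ 2 :=
    exp_taylor_abs lam t hlam.le ht0.le ht1
  have hkey : (∫ z : ℝ, (jfun lam alp t φ z) ^ 2 * gaussDensity z)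
      - φ ^ 2 * (1 + (2 * lam + alp ^ 2) * t) - 2 * lam * φ * t
      = φ ^ 2 * (Real.exp ((2 * lam + alp ^ 2) * t) - 1 - (2 * lam + alp ^ 2) * t)
        + (2 * lam * φ / (lam + alp ^ 2)) *
          ((Real.exp ((2 * lam + alp ^ 2) * t) - 1 - (2 * lam + alp ^ 2) * t)
            - (Real.exp (lam * t) - 1 - lam * t))
        + R := by
    rw [hsplit]
    field_simp
    ring
  rw [hkey]
  have h1 : |φ ^ 2 * (Real.exp ((2 * lam + alp ^ 2) * t) - 1 - (2 * lam + alp ^ 2) * t)|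
      ≤ φ ^ 2 * ((2 * lam + alp ^ 2) ^ 2 * Real.exp (2 * lam + alp ^ 2) / 2 * t ^ 2) := by
    rw [abs_mul, abs_of_nonneg (sq_nonneg φ)]
    exact mul_le_mul_of_nonneg_left hEa (sq_nonneg φ)
  have h2 : |(2 * lam * φ / (lam + alp ^ 2)) *
        ((Real.exp ((2 * lam + alp ^ 2) * t) - 1 - (2 * lam + alp ^ 2) * t)
          - (Real.exp (lam * t) - 1 - lam * t))|
      ≤ (2 * lam / (lam + alp ^ 2) * ((2 * lam + alp ^ 2) ^ 2 * Real.exp (2 * lam + alp ^ 2) / 2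
          + lam ^ 2 * Real.exp lam / 2)) * (φ * t ^ 2) := by
    rw [abs_mul, abs_of_nonneg (by positivity : (0:ℝ) ≤ 2 * lam * φ / (lam + alp ^ 2))]
    have hin : |(Real.exp ((2 * lam + alp ^ 2) * t) - 1 - (2 * lam + alp ^ 2) * t)
          - (Real.exp (lam * t) - 1 - lam * t)|
        ≤ ((2 * lam + alp ^ 2) ^ 2 * Real.exp (2 * lam + alp ^ 2) / 2
          + lam ^ 2 * Real.exp lam / 2) * t ^ 2 := by
      calc |(Real.exp ((2 * lam + alp ^ 2) * t) - 1 - (2 * lam + alp ^ 2) * t)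
            - (Real.exp (lam * t) - 1 - lam * t)|
          ≤ |Real.exp ((2 * lam + alp ^ 2) * t) - 1 - (2 * lam + alp ^ 2) * t|
            + |Real.exp (lam * t) - 1 - lam * t| := abs_sub _ _
        _ ≤ (2 * lam + alp ^ 2) ^ 2 * Real.exp (2 * lam + alp ^ 2) / 2 * t ^ 2
            + lam ^ 2 * Real.exp lam / 2 * t ^ 2 := add_le_add hEa hEb
        _ = ((2 * lam + alp ^ 2) ^ 2 * Real.exp (2 * lam + alp ^ 2) / 2
            + lam ^ 2 * Real.exp lam / 2) * t ^ 2 := by ring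
    calc (2 * lam * φ / (lam + alp ^ 2)) *
          |(Real.exp ((2 * lam + alp ^ 2) * t) - 1 - (2 * lam + alp ^ 2) * t)
            - (Real.exp (lam * t) - 1 - lam * t)|
        ≤ (2 * lam * φ / (lam + alp ^ 2)) *
          (((2 * lam + alp ^ 2) ^ 2 * Real.exp (2 * lam + alp ^ 2) / 2
            + lam ^ 2 * Real.exp lam / 2) * t ^ 2) :=
          mul_le_mul_of_nonneg_left hin (by positivity)
      _ = (2 * lam / (lam + alp ^ 2) * ((2 * lam + alp ^ 2) ^ 2 * Real.exp (2 * lam + alp ^ 2) / 2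
          + lam ^ 2 * Real.exp lam / 2)) * (φ * t ^ 2) := by ring
  have htri := abs_add_three
    (φ ^ 2 * (Real.exp ((2 * lam + alp ^ 2) * t) - 1 - (2 * lam + alp ^ 2) * t))
    ((2 * lam * φ / (lam + alp ^ 2)) *
      ((Real.exp ((2 * lam + alp ^ 2) * t) - 1 - (2 * lam + alp ^ 2) * t)
        - (Real.exp (lam * t) - 1 - lam * t)))
    R
  rw [abs_of_nonneg hR0] at htri
  refine htri.trans ((add_le_add (add_le_add h1 h2) hR1).trans ?_)
  exact assembly_ineq _ _ _ φ (t ^ 2) (by positivity) (by positivity) (by positivity)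
    hφ (sq_nonneg t)


/-- Small-time asymptotic expansion of the Gaussian second moment of the one-step
odds update: the error relative to `φ²(1 + (2λ + α²)t) + 2λφt` is `O((φ² + φ + 1) t²)`,
with a constant depending only on `λ` and `α`. -/
theorem gaussian_second_moment_jfun_asymptotics (lam alp : ℝ) (hlam : 0 < lam) (halp : 0 < alp) :
    ∃ C : ℝ, 0 < C ∧ ∀ t : ℝ, t ∈ Set.Ioc (0:ℝ) 1 → ∀ φ : ℝ, 0 ≤ φ →
      |(∫ z : ℝ, (jfun lam alp t φ z) ^ 2 * gaussDensity z) -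
          φ ^ 2 * (1 + (2 * lam + alp ^ 2) * t) - 2 * lam * φ * t| ≤
        C * (φ ^ 2 + φ + 1) * t ^ 2 := by
  refine ⟨(2 * lam + alp ^ 2) ^ 2 * Real.exp (2 * lam + alp ^ 2) / 2
      + 2 * lam / (lam + alp ^ 2) * ((2 * lam + alp ^ 2) ^ 2 * Real.exp (2 * lam + alp ^ 2) / 2
        + lam ^ 2 * Real.exp lam / 2)
      + lam ^ 2 * Real.exp (2 * lam) * (2 * Real.exp ((2 * alp) ^ 2 / 2)) + 1,
    by positivity, ?_⟩
  rintro t ⟨ht0, ht1⟩ φ hφ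
  exact main_est lam alp hlam halp ht0 ht1 φ hφ
end

section
/- Let w : [0, ∞) → ℝ be concave and nondecreasing with −1/c ≤ w(x) ≤ 0 for all x ≥ 0. Then J₀w is concave and nondecreasing on [0, ∞). (This is the inductive step showing that each value function vₙ, defined by v₀ = J₀0 and vₙ = J₀vₙ₋₁, is concave and nondecreasing.) -/
open MeasureTheory Real

/-- Deterministic evolution of the odds process between observations. -/
noncomputable def varphi (lam t x : ℝ) : ℝ := Real.exp (lam * t) * (x + 1) - 1

/-- The averaging operator `K`: Gaussian expectation of `w` applied to the
one-step odds update. -/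
noncomputable def Kop (lam alp : ℝ) (w : ℝ → ℝ) (t φ : ℝ) : ℝ :=
  ∫ z : ℝ, w (jfun lam alp t φ z) * gaussDensity z

/-- The jump operator `J`: running cost until the next observation at time `t`,
plus the discounted continuation value after that observation. -/
noncomputable def Jop (lam alp c : ℝ) (w : ℝ → ℝ) (t φ : ℝ) : ℝ :=
  (∫ u in (0:ℝ)..t, Real.exp (-(lam * u)) * (varphi lam u φ - lam / c)) +
    (if 0 < t then Real.exp (-(lam * t)) * Kop lam alp w t φ else 0)

/-- The optimized jump operator `J₀ w(φ) = inf_{t ≥ 0} J w(t, φ)`. -/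
noncomputable def J0op (lam alp c : ℝ) (w : ℝ → ℝ) (φ : ℝ) : ℝ :=
  ⨅ t : Set.Ici (0:ℝ), Jop lam alp c w t φ

section aux
variable {lam alp c t φ z x y p q : ℝ}

lemma jfun_nonneg (hlam : 0 ≤ lam) (ht : 0 ≤ t) (hφ : 0 ≤ φ) : 0 ≤ jfun lam alp t φ z := by
  unfold jfun
  have hB : 0 ≤ ∫ u in (0:ℝ)..t,
      lam * Real.exp ((lam + alp * z / Real.sqrt t) * u - alp ^ 2 * u ^ 2 / (2 * t)) :=
    intervalIntegral.integral_nonneg ht (fun u _ => by positivity)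
  have hA : 0 ≤ Real.exp (alp * z * Real.sqrt t + (lam - alp ^ 2 / 2) * t) * φ :=
    mul_nonneg (Real.exp_pos _).le hφ
  linarith

lemma jfun_affine (hpq : p + q = 1) :
    jfun lam alp t (p * x + q * y) z = p * jfun lam alp t x z + q * jfun lam alp t y z := by
  have hq : q = 1 - p := by linarith
  subst hq
  unfold jfun
  ring

lemma jfun_mono_phi (hxy : x ≤ y) : jfun lam alp t x z ≤ jfun lam alp t y z := by
  unfold jfun
  have := (Real.exp_pos (alp * z * Real.sqrt t + (lam - alp ^ 2 / 2) * t)).le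
  nlinarith

lemma jfun_cont_z (hlam : 0 ≤ lam) :
    Continuous fun u => lam * Real.exp ((lam + alp * z / Real.sqrt t) * u - alp ^ 2 * u ^ 2 / (2 * t)) := by
  fun_prop

lemma jfun_mono_z (halp : 0 < alp) (hlam : 0 ≤ lam) (ht : 0 < t) (hφ : 0 ≤ φ) :
    Monotone fun z => jfun lam alp t φ z := by
  intro z₁ z₂ hz
  have hst : 0 < Real.sqrt t := Real.sqrt_pos.mpr ht
  unfold jfun
  refine add_le_add ?_ ?_
  · refine mul_le_mul_of_nonneg_right (Real.exp_le_exp.mpr ?_) hφ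
    nlinarith [mul_le_mul_of_nonneg_right (mul_le_mul_of_nonneg_left hz halp.le) hst.le]
  · refine intervalIntegral.integral_mono_on ht.le
      (Continuous.intervalIntegrable (by fun_prop) _ _)
      (Continuous.intervalIntegrable (by fun_prop) _ _) ?_
    intro u hu
    have hu0 : 0 ≤ u := hu.1
    refine mul_le_mul_of_nonneg_left (Real.exp_le_exp.mpr ?_) hlam
    have h1 : alp * z₁ / Real.sqrt t ≤ alp * z₂ / Real.sqrt t := by gcongr
    nlinarith

end aux

section aux2
variable {lam alp c t φ z x y p q : ℝ} {w : ℝ → ℝ}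

lemma gauss_nonneg : 0 ≤ gaussDensity z := by unfold gaussDensity; positivity

lemma gauss_integrable : Integrable gaussDensity := by
  have h := integrable_exp_neg_mul_sq (by norm_num : (0:ℝ) < 1/2)
  have he : gaussDensity = fun z => Real.exp (-(1/2) * z ^ 2) * (Real.sqrt (2 * Real.pi))⁻¹ := by
    funext z; unfold gaussDensity; rw [div_eq_mul_inv]; ring_nf
  rw [he]; exact h.mul_const _

lemma gauss_integral : ∫ z : ℝ, gaussDensity z = 1 := by
  have h := integral_gaussian (1/2 : ℝ)
  have he : gaussDensity = fun z => Real.exp (-(1/2) * z ^ 2) * (Real.sqrt (2 * Real.pi))⁻¹ := by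
    funext z; unfold gaussDensity; rw [div_eq_mul_inv]; ring_nf
  rw [he, MeasureTheory.integral_mul_const, h]
  rw [show Real.pi / (1/2) = 2 * Real.pi by ring]
  rw [mul_inv_cancel₀]
  positivity

lemma abs_w_le (hc : 0 < c) (hwl : ∀ x : ℝ, 0 ≤ x → -1 / c ≤ w x)
    (hwu : ∀ x : ℝ, 0 ≤ x → w x ≤ 0) (hx : 0 ≤ x) : |w x| ≤ 1 / c := by
  have h1 := hwl x hx
  have h2 := hwu x hx
  have : (0:ℝ) ≤ 1 / c := by positivity
  rw [abs_le]
  constructor <;> [linarith [neg_div c (1:ℝ)]; linarith]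

lemma wj_integrable (hlam : 0 < lam) (halp : 0 < alp) (hc : 0 < c) (ht : 0 < t) (hφ : 0 ≤ φ)
    (hmono : MonotoneOn w (Set.Ici (0:ℝ)))
    (hwl : ∀ x : ℝ, 0 ≤ x → -1 / c ≤ w x) (hwu : ∀ x : ℝ, 0 ≤ x → w x ≤ 0) :
    Integrable fun z => w (jfun lam alp t φ z) * gaussDensity z := by
  have hmeas : Measurable fun z => w (jfun lam alp t φ z) := by
    have hmz : Monotone fun z => w (jfun lam alp t φ z) := fun z₁ z₂ hz =>
      hmono (jfun_nonneg hlam.le ht.le hφ) (jfun_nonneg hlam.le ht.le hφ)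
        (jfun_mono_z halp hlam.le ht hφ hz)
    exact hmz.measurable
  refine Integrable.mono' (gauss_integrable.const_mul (1/c))
    ((hmeas.mul (by unfold gaussDensity; fun_prop)).aestronglyMeasurable) ?_
  filter_upwards with z
  rw [Real.norm_eq_abs, abs_mul, abs_of_nonneg gauss_nonneg]
  exact mul_le_mul_of_nonneg_right
    (abs_w_le hc hwl hwu (jfun_nonneg hlam.le ht.le hφ)) gauss_nonneg

lemma Kop_mono (hlam : 0 < lam) (halp : 0 < alp) (hc : 0 < c) (ht : 0 < t)
    (hmono : MonotoneOn w (Set.Ici (0:ℝ)))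
    (hwl : ∀ x : ℝ, 0 ≤ x → -1 / c ≤ w x) (hwu : ∀ x : ℝ, 0 ≤ x → w x ≤ 0)
    (hx : 0 ≤ x) (hxy : x ≤ y) : Kop lam alp w t x ≤ Kop lam alp w t y := by
  refine integral_mono (wj_integrable hlam halp hc ht hx hmono hwl hwu)
    (wj_integrable hlam halp hc ht (hx.trans hxy) hmono hwl hwu) fun z => ?_
  exact mul_le_mul_of_nonneg_right
    (hmono (jfun_nonneg hlam.le ht.le hx) (jfun_nonneg hlam.le ht.le (hx.trans hxy))
      (jfun_mono_phi hxy)) gauss_nonneg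

lemma Kop_concave (hlam : 0 < lam) (halp : 0 < alp) (hc : 0 < c) (ht : 0 < t)
    (hconc : ConcaveOn ℝ (Set.Ici (0:ℝ)) w) (hmono : MonotoneOn w (Set.Ici (0:ℝ)))
    (hwl : ∀ x : ℝ, 0 ≤ x → -1 / c ≤ w x) (hwu : ∀ x : ℝ, 0 ≤ x → w x ≤ 0)
    (hx : 0 ≤ x) (hy : 0 ≤ y) (hp : 0 ≤ p) (hq : 0 ≤ q) (hpq : p + q = 1) :
    p * Kop lam alp w t x + q * Kop lam alp w t y ≤ Kop lam alp w t (p * x + q * y) := by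
  have hix := wj_integrable hlam halp hc ht hx hmono hwl hwu
  have hiy := wj_integrable hlam halp hc ht hy hmono hwl hwu
  have hixy := wj_integrable hlam halp hc ht
    (add_nonneg (mul_nonneg hp hx) (mul_nonneg hq hy)) hmono hwl hwu
  unfold Kop
  rw [← MeasureTheory.integral_const_mul, ← MeasureTheory.integral_const_mul,
    ← MeasureTheory.integral_add (hix.const_mul p) (hiy.const_mul q)]
  refine integral_mono ((hix.const_mul p).add (hiy.const_mul q)) hixy fun z => ?_
  simp only
  have hjx : (0:ℝ) ≤ jfun lam alp t x z := jfun_nonneg hlam.le ht.le hx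
  have hjy : (0:ℝ) ≤ jfun lam alp t y z := jfun_nonneg hlam.le ht.le hy
  have hj := hconc.2 (Set.mem_Ici.mpr hjx) (Set.mem_Ici.mpr hjy) hp hq hpq
  simp only [smul_eq_mul] at hj
  rw [jfun_affine hpq]
  nlinarith [gauss_nonneg (z := z), hj]

lemma Kop_bounds (hlam : 0 < lam) (halp : 0 < alp) (hc : 0 < c) (ht : 0 < t) (hφ : 0 ≤ φ)
    (hmono : MonotoneOn w (Set.Ici (0:ℝ)))
    (hwl : ∀ x : ℝ, 0 ≤ x → -1 / c ≤ w x) (hwu : ∀ x : ℝ, 0 ≤ x → w x ≤ 0) :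
    -(1/c) ≤ Kop lam alp w t φ ∧ Kop lam alp w t φ ≤ 0 := by
  have hint := wj_integrable hlam halp hc ht hφ hmono hwl hwu
  constructor
  · have : ∫ z : ℝ, (-(1/c)) * gaussDensity z ≤ Kop lam alp w t φ := by
      refine integral_mono (gauss_integrable.const_mul _) hint fun z => ?_
      refine mul_le_mul_of_nonneg_right ?_ gauss_nonneg
      have h0 : (0:ℝ) ≤ jfun lam alp t φ z := jfun_nonneg hlam.le ht.le hφ
      have := hwl _ h0
      linarith [neg_div c (1:ℝ)]
    rwa [MeasureTheory.integral_const_mul, gauss_integral, mul_one] at this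
  · refine integral_nonpos fun z => ?_
    have h0 : (0:ℝ) ≤ jfun lam alp t φ z := jfun_nonneg hlam.le ht.le hφ
    exact mul_nonpos_of_nonpos_of_nonneg (hwu _ h0) gauss_nonneg

end aux2

section aux3
variable {lam alp c t φ z x y p q : ℝ} {w : ℝ → ℝ}

lemma exp_int (hlam : 0 < lam) (t : ℝ) :
    ∫ u in (0:ℝ)..t, Real.exp (-(lam * u)) = (1 - Real.exp (-(lam * t))) / lam := by
  have h1 : ∫ u in (0:ℝ)..t, Real.exp (-(lam * u))
      = lam⁻¹ • ∫ x in (lam * 0)..(lam * t), Real.exp (-x) :=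
    intervalIntegral.integral_comp_mul_left (fun x => Real.exp (-x)) hlam.ne'
  rw [h1, intervalIntegral.integral_comp_neg (fun x => Real.exp x), integral_exp]
  rw [mul_zero, neg_zero, Real.exp_zero, smul_eq_mul]
  field_simp

lemma run_integrand (lam c φ u : ℝ) :
    Real.exp (-(lam * u)) * (varphi lam u φ - lam / c)
      = (φ + 1) - Real.exp (-(lam * u)) * (1 + lam / c) := by
  have h1 : Real.exp (-(lam * u)) * Real.exp (lam * u) = 1 := by
    rw [← Real.exp_add]; simp
  unfold varphi
  linear_combination (φ + 1) * h1

lemma run_eq (hlam : 0 < lam) (t φ : ℝ) :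
    (∫ u in (0:ℝ)..t, Real.exp (-(lam * u)) * (varphi lam u φ - lam / c))
      = t * (φ + 1) - (1 + lam / c) * ((1 - Real.exp (-(lam * t))) / lam) := by
  simp only [run_integrand]
  rw [intervalIntegral.integral_sub (intervalIntegrable_const)
    ((Continuous.intervalIntegrable (by fun_prop) _ _)),
    intervalIntegral.integral_const, intervalIntegral.integral_mul_const, exp_int hlam]
  simp [smul_eq_mul]
  ring

lemma Jop_lb (hlam : 0 < lam) (halp : 0 < alp) (hc : 0 < c) (ht : 0 ≤ t) (hφ : 0 ≤ φ)
    (hmono : MonotoneOn w (Set.Ici (0:ℝ)))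
    (hwl : ∀ x : ℝ, 0 ≤ x → -1 / c ≤ w x) (hwu : ∀ x : ℝ, 0 ≤ x → w x ≤ 0) :
    -((1 + lam / c) / lam + 1 / c) ≤ Jop lam alp c w t φ := by
  unfold Jop
  rw [run_eq hlam]
  have he0 : 0 ≤ Real.exp (-(lam * t)) := (Real.exp_pos _).le
  have he1 : Real.exp (-(lam * t)) ≤ 1 := by
    rw [Real.exp_le_one_iff]; nlinarith
  have ht1 : 0 ≤ t * (φ + 1) := mul_nonneg ht (by linarith)
  have hC : (1 + lam / c) * ((1 - Real.exp (-(lam * t))) / lam) ≤ (1 + lam / c) * (1 / lam) := by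
    have h1 : 0 ≤ 1 + lam / c := by positivity
    have h2 : (1 - Real.exp (-(lam * t))) / lam ≤ 1 / lam := by gcongr; linarith
    exact mul_le_mul_of_nonneg_left h2 h1
  have hc0 : (0:ℝ) ≤ 1 / c := by positivity
  have hfix : (1 + lam / c) * (1 / lam) = (1 + lam / c) / lam := by ring
  split_ifs with h
  · have hK := Kop_bounds hlam halp hc h hφ hmono hwl hwu
    have hE : -(1 / c) ≤ Real.exp (-(lam * t)) * Kop lam alp w t φ := by
      nlinarith [hK.1, hK.2]
    linarith [hE, hC, hfix]
  · linarith [hC, hfix]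

lemma Jop_mono (hlam : 0 < lam) (halp : 0 < alp) (hc : 0 < c) (ht : 0 ≤ t)
    (hmono : MonotoneOn w (Set.Ici (0:ℝ)))
    (hwl : ∀ x : ℝ, 0 ≤ x → -1 / c ≤ w x) (hwu : ∀ x : ℝ, 0 ≤ x → w x ≤ 0)
    (hx : 0 ≤ x) (hxy : x ≤ y) : Jop lam alp c w t x ≤ Jop lam alp c w t y := by
  unfold Jop
  rw [run_eq hlam, run_eq hlam]
  refine add_le_add (by nlinarith) ?_
  split_ifs with h
  · exact mul_le_mul_of_nonneg_left
      (Kop_mono hlam halp hc h hmono hwl hwu hx hxy) (Real.exp_pos _).le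
  · exact le_rfl

lemma Jop_comb (hlam : 0 < lam) (halp : 0 < alp) (hc : 0 < c) (ht : 0 ≤ t)
    (hconc : ConcaveOn ℝ (Set.Ici (0:ℝ)) w) (hmono : MonotoneOn w (Set.Ici (0:ℝ)))
    (hwl : ∀ x : ℝ, 0 ≤ x → -1 / c ≤ w x) (hwu : ∀ x : ℝ, 0 ≤ x → w x ≤ 0)
    (hx : 0 ≤ x) (hy : 0 ≤ y) (hp : 0 ≤ p) (hq : 0 ≤ q) (hpq : p + q = 1) :
    p * Jop lam alp c w t x + q * Jop lam alp c w t y ≤ Jop lam alp c w t (p * x + q * y) := by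
  unfold Jop
  rw [run_eq hlam, run_eq hlam, run_eq hlam]
  have h1 : q = 1 - p := by linarith
  split_ifs with h
  · have hK := Kop_concave hlam halp hc h hconc hmono hwl hwu hx hy hp hq hpq
    have hE := mul_le_mul_of_nonneg_left hK (Real.exp_pos (-(lam * t))).le
    subst h1
    nlinarith [hE]
  · subst h1
    exact le_of_eq (by ring)

end aux3


lemma Jop_bddBelow {lam alp c : ℝ} {w : ℝ → ℝ} (hlam : 0 < lam) (halp : 0 < alp) (hc : 0 < c)
    (hmono : MonotoneOn w (Set.Ici (0:ℝ)))
    (hwl : ∀ x : ℝ, 0 ≤ x → -1 / c ≤ w x) (hwu : ∀ x : ℝ, 0 ≤ x → w x ≤ 0)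
    {φ : ℝ} (hφ : 0 ≤ φ) :
    BddBelow (Set.range fun t : Set.Ici (0:ℝ) => Jop lam alp c w t φ) := by
  refine ⟨-((1 + lam / c) / lam + 1 / c), ?_⟩
  rintro _ ⟨t, rfl⟩
  exact Jop_lb hlam halp hc t.2 hφ hmono hwl hwu


/-- If `w` is concave, nondecreasing, and valued in `[−1/c, 0]` on `[0, ∞)`, then
`J₀w` is concave and nondecreasing on `[0, ∞)`. -/
theorem J0op_concave_monotone (lam alp c : ℝ) (hlam : 0 < lam) (halp : 0 < alp) (hc : 0 < c)
    (w : ℝ → ℝ) (hconc : ConcaveOn ℝ (Set.Ici (0:ℝ)) w)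
    (hmono : MonotoneOn w (Set.Ici (0:ℝ)))
    (hwl : ∀ x : ℝ, 0 ≤ x → -1 / c ≤ w x) (hwu : ∀ x : ℝ, 0 ≤ x → w x ≤ 0) :
    ConcaveOn ℝ (Set.Ici (0:ℝ)) (J0op lam alp c w) ∧
      MonotoneOn (J0op lam alp c w) (Set.Ici (0:ℝ)) := by
  haveI : Nonempty (Set.Ici (0:ℝ)) := ⟨⟨0, Set.mem_Ici.mpr le_rfl⟩⟩
  constructor
  · refine ⟨convex_Ici 0, ?_⟩
    intro x hx y hy p q hp hq hpq
    rw [Set.mem_Ici] at hx hy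
    simp only [smul_eq_mul, J0op]
    have hbx := Jop_bddBelow hlam halp hc hmono hwl hwu hx
    have hby := Jop_bddBelow hlam halp hc hmono hwl hwu hy
    refine le_ciInf fun tt => ?_
    calc p * (⨅ t : Set.Ici (0:ℝ), Jop lam alp c w t x)
          + q * (⨅ t : Set.Ici (0:ℝ), Jop lam alp c w t y)
        ≤ p * Jop lam alp c w tt x + q * Jop lam alp c w tt y :=
          add_le_add (mul_le_mul_of_nonneg_left (ciInf_le hbx tt) hp)
            (mul_le_mul_of_nonneg_left (ciInf_le hby tt) hq)
      _ ≤ Jop lam alp c w tt (p * x + q * y) :=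
          Jop_comb hlam halp hc tt.2 hconc hmono hwl hwu hx hy hp hq hpq
  · intro x hx y hy hxy
    rw [Set.mem_Ici] at hx hy
    simp only [J0op]
    refine le_ciInf fun tt => ?_
    calc (⨅ t : Set.Ici (0:ℝ), Jop lam alp c w t x)
        ≤ Jop lam alp c w tt x := ciInf_le (Jop_bddBelow hlam halp hc hmono hwl hwu hx) tt
      _ ≤ Jop lam alp c w tt y := Jop_mono hlam halp hc tt.2 hmono hwl hwu hx hxy
end
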